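/- If A has a k-dimensional Wishart distribution with n degrees of freedom and covariance Σ of rank r < k, and M is p×k of rank p with rank(MΣ) = p ≤ r, then MAMᵀ and MΣMᵀ are both of full rank p (almost surely, for MAMᵀ, when p ≤ n). -/

import Mathlib

open scoped Classical
open MeasureTheory ProbabilityTheory Matrix Real Filter

noncomputable section

/-- Borel product measurable structure on matrices. -/
instance matMeas {m n : Type*} : MeasurableSpace (Matrix m n ℝ) := MeasurableSpace.pi

/-- The distribution of a vector of `k` i.i.d. standard normal random variables. -/
def stdGaussianPi (k : ℕ) : Measure (Fin k → ℝ) := Measure.pi fun _ => gaussianReal 0 1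

/-- Symmetric positive semidefinite square root of a PSD matrix (junk value `0` otherwise). -/
def psdSqrt {p : ℕ} (S : Matrix (Fin p) (Fin p) ℝ) : Matrix (Fin p) (Fin p) ℝ :=
  if h : S.PosSemidef then
    (h.1.eigenvectorUnitary : Matrix (Fin p) (Fin p) ℝ) *
      diagonal ((↑) ∘ (fun x => √x) ∘ h.1.eigenvalues) *
      (star h.1.eigenvectorUnitary : Matrix (Fin p) (Fin p) ℝ)
  else 0

/-- `S^{-1/2}`: the inverse of the symmetric square root of `S`. -/
def invSqrt {p : ℕ} (S : Matrix (Fin p) (Fin p) ℝ) : Matrix (Fin p) (Fin p) ℝ := (psdSqrt S)⁻¹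

/-- The (possibly singular) multivariate normal distribution `N_k(μ, S)`, defined as the
law of `μ + S^{1/2} x` with `x` a standard normal vector. -/
def mvNormal {k : ℕ} (μ : Fin k → ℝ) (S : Matrix (Fin k) (Fin k) ℝ) : Measure (Fin k → ℝ) :=
  (stdGaussianPi k).map (fun x => μ + (psdSqrt S).mulVec x)

/-- The (possibly singular) Wishart distribution `W_k(n, S)`, defined as the law of
`A = X Xᵀ` where the `n` columns of the `k × n` matrix `X` are i.i.d. `N_k(0, S)`. -/
def wishart {k : ℕ} (n : ℕ) (S : Matrix (Fin k) (Fin k) ℝ) :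
    Measure (Matrix (Fin k) (Fin k) ℝ) :=
  (Measure.pi fun _ : Fin n => mvNormal 0 S).map
    (fun X => Matrix.of fun i j => ∑ c, X c i * X c j)

/-- The chi-squared distribution with `n` degrees of freedom: law of the sum of squares of
`n` i.i.d. standard normals. -/
def chiSq (n : ℕ) : Measure ℝ := (stdGaussianPi n).map (fun x => ∑ i, (x i) ^ 2)

/-- The noncentral chi-squared distribution with 1 degree of freedom and
noncentrality parameter `d`: law of `x²`, `x ~ N(√d, 1)`. -/
def chiSq1NC (d : ℝ) : Measure ℝ := (gaussianReal (Real.sqrt d) 1).map (fun x => x ^ 2)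

open Module Set Function



lemma det_ne_zero_iff_rank {q : ℕ} (C : Matrix (Fin q) (Fin q) ℝ) : C.det ≠ 0 ↔ C.rank = q := by
  constructor
  · intro h
    simpa using Matrix.rank_of_isUnit C (C.isUnit_iff_isUnit_det.mpr (isUnit_iff_ne_zero.2 h))
  · intro h hdet
    obtain ⟨v, hv, hv0⟩ := (Matrix.exists_mulVec_eq_zero_iff).2 hdet
    have hker : v ∈ LinearMap.ker C.mulVecLin := by simpa [Matrix.mulVecLin_apply] using hv0
    have h1 := LinearMap.finrank_range_add_finrank_ker C.mulVecLin
    rw [show Module.finrank ℝ (Fin q → ℝ) = q by simp] at h1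
    have h2 : C.rank = finrank ℝ (LinearMap.range C.mulVecLin) := rfl
    have h3 : finrank ℝ (LinearMap.ker C.mulVecLin) = 0 := by omega
    rw [Submodule.finrank_eq_zero] at h3
    rw [h3] at hker
    exact hv (by simpa using hker)

/-- Gram determinant of a finite family of vectors in `ℝ^p`. -/
def detGram {j p : ℕ} (w : Fin j → (Fin p → ℝ)) : ℝ :=
  (Matrix.of fun a b => ∑ i, w a i * w b i).det

lemma linearIndependent_iff_detGram {j p : ℕ} (w : Fin j → (Fin p → ℝ)) :
    LinearIndependent ℝ w ↔ detGram w ≠ 0 := by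
  set V : Matrix (Fin j) (Fin p) ℝ := Matrix.of w with hV
  have hGram : (Matrix.of fun a b => ∑ i, w a i * w b i) = V * Vᵀ := by
    ext a b
    simp [Matrix.mul_apply, hV]
  have hrank : (V * Vᵀ).rank = V.rank := Matrix.rank_self_mul_transpose V
  rw [detGram, hGram, det_ne_zero_iff_rank, hrank]
  constructor
  · intro h
    have := LinearIndependent.rank_matrix (M := V) h
    simpa using this
  · intro h
    rw [linearIndependent_iff_card_eq_finrank_span]
    rw [Matrix.rank_eq_finrank_span_row] at h
    simp only [Fintype.card_fin]
    exact h.symm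

lemma measurable_det_comp {X : Type*} [MeasurableSpace X] {q : ℕ}
    {C : X → Matrix (Fin q) (Fin q) ℝ} (h : ∀ a b, Measurable fun x => C x a b) :
    Measurable fun x => (C x).det := by
  simp_rw [Matrix.det_apply']
  exact Finset.measurable_sum _ fun σ _ =>
    (Finset.measurable_prod _ fun a _ => h _ _).const_mul _

lemma measurable_mulVec_comp {X : Type*} [MeasurableSpace X] {p k : ℕ}
    (B : Matrix (Fin p) (Fin k) ℝ) {h : X → (Fin k → ℝ)} (hh : Measurable h) (a : Fin p) :
    Measurable fun x => B.mulVec (h x) a := by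
  simp only [Matrix.mulVec, dotProduct]
  exact Finset.measurable_sum _ fun t _ => ((measurable_pi_apply t).comp hh).const_mul _

instance stdGaussianPi_prob (k : ℕ) : IsProbabilityMeasure (stdGaussianPi k) := by
  unfold stdGaussianPi; infer_instance

lemma gauss_hyperplane {k : ℕ} {a : Fin k → ℝ} (ha : a ≠ 0) (t : ℝ) :
    stdGaussianPi k {x | ∑ i, a i * x i = t} = 0 := by
  obtain ⟨i0, hi0⟩ := Function.ne_iff.mp ha
  simp only [Pi.zero_apply] at hi0
  obtain ⟨m, rfl⟩ : ∃ m, k = m + 1 := ⟨k - 1, (Nat.succ_pred_eq_of_pos i0.pos).symm⟩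
  set g1 : Measure ℝ := gaussianReal 0 1 with hg1
  set μm : Measure (Fin m → ℝ) := Measure.pi fun _ => g1 with hμm
  set e := MeasurableEquiv.piFinSuccAbove (fun _ : Fin (m+1) => ℝ) i0 with he
  have hp : MeasurePreserving e (stdGaussianPi (m+1)) (g1.prod μm) :=
    measurePreserving_piFinSuccAbove (fun _ => g1) i0
  set F : Set (ℝ × (Fin m → ℝ)) :=
    {yz | a i0 * yz.1 + ∑ j, a (i0.succAbove j) * yz.2 j = t} with hF
  have hFm : MeasurableSet F := by
    have : Measurable fun yz : ℝ × (Fin m → ℝ) =>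
        a i0 * yz.1 + ∑ j, a (i0.succAbove j) * yz.2 j :=
      (measurable_fst.const_mul _).add
        (Finset.measurable_sum _ fun j _ => ((measurable_pi_apply j).comp measurable_snd).const_mul _)
    exact this (measurableSet_singleton t)
  have hset : {x : Fin (m+1) → ℝ | ∑ i, a i * x i = t} = e ⁻¹' F := by
    ext x
    simp only [Set.mem_setOf_eq, Set.mem_preimage, hF]
    rw [Fin.sum_univ_succAbove (fun i => a i * x i) i0]
    rfl
  rw [hset, ← e.map_apply, hp.map_eq]
  -- now (g1.prod μm) F = 0
  rw [show g1.prod μm = (μm.prod g1).map Prod.swap from (Measure.prod_swap).symm,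
    Measure.map_apply measurable_swap hFm]
  rw [Measure.measure_prod_null (hFm.preimage measurable_swap)]
  refine Filter.Eventually.of_forall fun z => ?_
  have : (Prod.mk z ⁻¹' (Prod.swap ⁻¹' F)) = {(t - ∑ j, a (i0.succAbove j) * z j) / a i0} := by
    ext y
    simp only [Set.mem_preimage, Prod.swap_prod_mk, hF, Set.mem_setOf_eq, Set.mem_singleton_iff]
    rw [eq_div_iff hi0]
    constructor
    · intro h; linarith
    · intro h; linarith
  show g1 (Prod.mk z ⁻¹' (Prod.swap ⁻¹' F)) = 0
  rw [this]
  exact gaussianReal_absolutelyContinuous 0 one_ne_zero (measure_singleton _)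

lemma measure_mulVec_mem_proper {k p : ℕ} (B : Matrix (Fin p) (Fin k) ℝ) (hB : B.rank = p)
    (V : Submodule ℝ (Fin p → ℝ)) (hV : V ≠ ⊤) :
    stdGaussianPi k {x | B.mulVec x ∈ V} = 0 := by
  obtain ⟨f, hf0, hfV⟩ := V.exists_dual_map_eq_bot_of_lt_top (lt_top_iff_ne_top.2 hV) inferInstance
  have hsurj : Function.Surjective B.mulVec := by
    have hrange : LinearMap.range B.mulVecLin = ⊤ := by
      apply Submodule.eq_top_of_finrank_eq
      rw [show finrank ℝ (LinearMap.range B.mulVecLin) = B.rank from rfl, hB]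
      simp
    intro v
    have : v ∈ LinearMap.range B.mulVecLin := hrange ▸ Submodule.mem_top
    obtain ⟨x, hx⟩ := this
    exact ⟨x, hx⟩
  set φ : (Fin k → ℝ) →ₗ[ℝ] ℝ := f.comp B.mulVecLin with hφ
  set a : Fin k → ℝ := fun i => φ fun j => if i = j then 1 else 0 with haa
  have hφx : ∀ x, φ x = ∑ i, a i * x i := by
    intro x
    rw [LinearMap.pi_apply_eq_sum_univ φ x]
    exact Finset.sum_congr rfl fun i _ => by rw [smul_eq_mul, mul_comm]
  have hane : a ≠ 0 := by
    intro h0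
    obtain ⟨v, hv⟩ : ∃ v, f v ≠ 0 := by
      by_contra hc
      push_neg at hc
      exact hf0 (LinearMap.ext fun v => by simp [hc v])
    obtain ⟨x, hx⟩ := hsurj v
    have : φ x = f v := by simp [hφ, Matrix.mulVecLin_apply, hx]
    rw [hφx x, h0] at this
    simp at this
    exact hv this.symm
  refine measure_mono_null ?_ (gauss_hyperplane hane 0)
  intro x hx
  have : f (B.mulVec x) = 0 := by
    have hmem : f (B.mulVec x) ∈ V.map f := Submodule.mem_map_of_mem hx
    rw [hfV] at hmem
    simpa using hmem
  simp only [Set.mem_setOf_eq, ← hφx]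
  simpa [hφ, Matrix.mulVecLin_apply] using this

lemma measurable_detGram_comp {X : Type*} [MeasurableSpace X] {j p : ℕ}
    {w : X → Fin j → (Fin p → ℝ)} (h : ∀ a i, Measurable fun x => w x a i) :
    Measurable fun x => detGram (w x) := by
  unfold detGram
  apply measurable_det_comp
  intro a b
  simp only [Matrix.of_apply]
  exact Finset.measurable_sum _ fun i _ => (h a i).mul (h b i)

set_option maxHeartbeats 1000000 in
lemma core_linindep {k p n : ℕ} (B : Matrix (Fin p) (Fin k) ℝ) (hB : B.rank = p) :
    ∀ (m : ℕ), m ≤ p → ∀ (g : Fin m → Fin n), Function.Injective g →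
    ∀ᵐ x ∂(Measure.pi fun _ : Fin n => stdGaussianPi k),
      LinearIndependent ℝ (fun a : Fin m => B.mulVec (x (g a))) := by
  intro m
  induction m with
  | zero =>
    intro _ g _
    exact Filter.Eventually.of_forall fun x => linearIndependent_empty_type
  | succ m IH =>
    intro hm g hg
    have hmp : m < p := hm
    have hIH := IH hmp.le (fun a => g a.castSucc) (hg.comp (Fin.castSucc_injective _))
    rcases n with _ | n'
    · exact (g (Fin.last m)).elim0
    set ν := stdGaussianPi k with hν
    set μn : Measure (Fin (n'+1) → (Fin k → ℝ)) := Measure.pi fun _ => ν with hμn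
    set μ' : Measure (Fin n' → (Fin k → ℝ)) := Measure.pi fun _ => ν with hμ'
    set c := g (Fin.last m) with hc
    set e := MeasurableEquiv.piFinSuccAbove (fun _ : Fin (n'+1) => (Fin k → ℝ)) c with he
    have hp : MeasurePreserving e μn (ν.prod μ') :=
      measurePreserving_piFinSuccAbove (fun _ => ν) c
    -- index map j
    have hne : ∀ a : Fin m, g a.castSucc ≠ c := fun a h =>
      absurd (hg h) (Fin.castSucc_lt_last a).ne
    have hj : ∀ a : Fin m, ∃ j : Fin n', c.succAbove j = g a.castSucc := fun a =>
      Fin.exists_succAbove_eq (hne a)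
    choose jj hjj using hj
    -- families
    set u : (Fin n' → (Fin k → ℝ)) → Fin m → (Fin p → ℝ) :=
      fun z a => B.mulVec (z (jj a)) with hu
    set d1 : (Fin n' → (Fin k → ℝ)) → ℝ := fun z => detGram (u z) with hd1
    set d2 : (Fin k → ℝ) × (Fin n' → (Fin k → ℝ)) → ℝ :=
      fun yz => detGram (Fin.snoc (u yz.2) (B.mulVec yz.1)) with hd2
    set F : Set ((Fin k → ℝ) × (Fin n' → (Fin k → ℝ))) :=
      {yz | d1 yz.2 ≠ 0 ∧ d2 yz = 0} with hF
    have hmeas_u : ∀ (a : Fin m) (i : Fin p),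
        Measurable fun z : Fin n' → (Fin k → ℝ) => u z a i := fun a i =>
      measurable_mulVec_comp B (measurable_pi_apply (jj a)) i
    have hmeas_d1 : Measurable d1 := measurable_detGram_comp hmeas_u
    have hent : ∀ (a : Fin (m+1)) (i : Fin p),
        Measurable fun yz : (Fin k → ℝ) × (Fin n' → (Fin k → ℝ)) =>
          (Fin.snoc (u yz.2) (B.mulVec yz.1) : Fin (m+1) → (Fin p → ℝ)) a i := by
      intro a i
      refine Fin.lastCases ?_ ?_ a
      · simpa using (measurable_mulVec_comp B measurable_fst i)
      · intro a'
        simpa [Function.comp_def] using ((hmeas_u a' i).comp measurable_snd)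
    have hmeas_d2 : Measurable d2 := measurable_detGram_comp hent
    have hFmeas : MeasurableSet F := by
      have h1 : MeasurableSet {yz : (Fin k → ℝ) × (Fin n' → (Fin k → ℝ)) | d1 yz.2 ≠ 0} :=
        ((hmeas_d1.comp measurable_snd) (measurableSet_singleton 0)).compl
      have h2 : MeasurableSet {yz : (Fin k → ℝ) × (Fin n' → (Fin k → ℝ)) | d2 yz = 0} :=
        hmeas_d2 (measurableSet_singleton 0)
      exact h1.inter h2
    -- the target
    rw [MeasureTheory.ae_iff]
    set N1 : Set (Fin (n'+1) → (Fin k → ℝ)) :=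
      {x | ¬ LinearIndependent ℝ (fun a : Fin m => B.mulVec (x (g a.castSucc)))} with hN1
    have hN1null : μn N1 = 0 := by
      rw [← MeasureTheory.ae_iff] at *
      exact hIH
    have hsub : {x | ¬ LinearIndependent ℝ (fun a : Fin (m+1) => B.mulVec (x (g a)))}
        ⊆ N1 ∪ e ⁻¹' F := by
      intro x hx
      simp only [Set.mem_setOf_eq] at hx
      by_cases hw : LinearIndependent ℝ (fun a : Fin m => B.mulVec (x (g a.castSucc)))
      · right
        have hex : (e x).1 = x c ∧ ∀ j, (e x).2 j = x (c.succAbove j) := ⟨rfl, fun _ => rfl⟩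
        have hu2 : u (e x).2 = fun a => B.mulVec (x (g a.castSucc)) := by
          funext a
          rw [hu]
          simp only
          rw [(hex.2 (jj a)), hjj a]
        have hsnoc : (Fin.snoc (u (e x).2) (B.mulVec (e x).1) : Fin (m+1) → (Fin p → ℝ))
            = fun a : Fin (m+1) => B.mulVec (x (g a)) := by
          funext a
          refine Fin.lastCases ?_ ?_ a
          · rw [Fin.snoc_last]; rw [hex.1]
          · intro a'
            rw [Fin.snoc_castSucc, hu2]
        have hd2x : d2 (e x) = 0 := by
          rw [hd2]
          simp only
          rw [hsnoc]
          by_contra hcon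
          exact hx ((linearIndependent_iff_detGram _).mpr hcon)
        have hd1x : d1 (e x).2 ≠ 0 := by
          rw [hd1]
          simp only
          rw [hu2]
          exact (linearIndependent_iff_detGram _).mp hw
        exact ⟨hd1x, hd2x⟩
      · left; exact hw
    refine measure_mono_null hsub ?_
    refine measure_union_null hN1null ?_
    have : μn (e ⁻¹' F) = (ν.prod μ') F := by
      rw [← e.map_apply, hp.map_eq]
    rw [this]
    rw [show ν.prod μ' = (μ'.prod ν).map Prod.swap from (Measure.prod_swap).symm,
      Measure.map_apply measurable_swap hFmeas,
      Measure.measure_prod_null (hFmeas.preimage measurable_swap)]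
    refine Filter.Eventually.of_forall fun z => ?_
    show ν (Prod.mk z ⁻¹' (Prod.swap ⁻¹' F)) = 0
    by_cases hz : d1 z ≠ 0
    · have hindep : LinearIndependent ℝ (u z) := (linearIndependent_iff_detGram _).mpr hz
      have hVne : Submodule.span ℝ (Set.range (u z)) ≠ ⊤ := by
        intro htop
        have hcard := linearIndependent_iff_card_eq_finrank_span.mp hindep
        have hm2 : (m : ℕ) = finrank ℝ (Submodule.span ℝ (Set.range (u z))) := by
          simpa [Set.finrank] using hcard
        rw [htop, finrank_top] at hm2
        simp only [show finrank ℝ (Fin p → ℝ) = p by simp] at hm2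
        omega
      have hslice : (Prod.mk z ⁻¹' (Prod.swap ⁻¹' F))
          ⊆ {y | B.mulVec y ∈ Submodule.span ℝ (Set.range (u z))} := by
        intro y hy
        simp only [Set.mem_preimage, Prod.swap_prod_mk, hF, Set.mem_setOf_eq] at hy
        obtain ⟨-, hy2⟩ := hy
        have hdep : ¬ LinearIndependent ℝ
            (Fin.snoc (u z) (B.mulVec y) : Fin (m+1) → (Fin p → ℝ)) := by
          intro hcon
          exact absurd ((linearIndependent_iff_detGram _).mp hcon) (by simpa using hy2)
        rw [linearIndependent_fin_snoc] at hdep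
        push_neg at hdep
        exact hdep hindep
      exact measure_mono_null hslice (measure_mulVec_mem_proper B hB _ hVne)
    · push_neg at hz
      have : (Prod.mk z ⁻¹' (Prod.swap ⁻¹' F)) = ∅ := by
        ext y
        simp only [Set.mem_preimage, Prod.swap_prod_mk, hF, Set.mem_setOf_eq,
          Set.mem_empty_iff_false, iff_false]
        intro hy
        exact hy.1 hz
      rw [this]
      simp

instance mvNormal_prob {k : ℕ} (μ₀ : Fin k → ℝ) (S : Matrix (Fin k) (Fin k) ℝ) :
    IsProbabilityMeasure (mvNormal μ₀ S) := by
  unfold mvNormal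
  exact Measure.isProbabilityMeasure_map (Measurable.aemeasurable (by
    exact measurable_const.add
      (measurable_pi_lambda _ fun a => measurable_mulVec_comp _ measurable_id a)))

lemma measurable_mulVec_fun {p k : ℕ} (B : Matrix (Fin p) (Fin k) ℝ) :
    Measurable B.mulVec :=
  measurable_pi_lambda _ fun a => measurable_mulVec_comp B measurable_id a

lemma mvNormal_zero_eq {k : ℕ} (S : Matrix (Fin k) (Fin k) ℝ) :
    mvNormal 0 S = (stdGaussianPi k).map (psdSqrt S).mulVec := by
  unfold mvNormal
  congr 1
  funext x
  simp

lemma pi_mvNormal_eq_map {k n : ℕ} (S : Matrix (Fin k) (Fin k) ℝ) :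
    Measure.pi (fun _ : Fin n => mvNormal 0 S)
      = (Measure.pi fun _ : Fin n => stdGaussianPi k).map
          (fun X c => (psdSqrt S).mulVec (X c)) := by
  have hG : Measurable fun (X : Fin n → (Fin k → ℝ)) (c : Fin n) => (psdSqrt S).mulVec (X c) :=
    measurable_pi_lambda _ fun c => (measurable_mulVec_fun _).comp (measurable_pi_apply c)
  refine Measure.pi_eq fun s hs => ?_
  rw [Measure.map_apply hG (MeasurableSet.univ_pi hs)]
  have hpre : (fun (X : Fin n → (Fin k → ℝ)) (c : Fin n) => (psdSqrt S).mulVec (X c)) ⁻¹'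
      (Set.univ.pi s) = Set.univ.pi fun c => (psdSqrt S).mulVec ⁻¹' (s c) := by
    ext X
    simp [Set.mem_pi]
  rw [hpre, Measure.pi_pi]
  refine Finset.prod_congr rfl fun c _ => ?_
  rw [mvNormal_zero_eq, Measure.map_apply (measurable_mulVec_fun _) (hs c)]

lemma measurable_matrix_entry {k : ℕ} (i j : Fin k) :
    Measurable fun A : Matrix (Fin k) (Fin k) ℝ => A i j :=
  (measurable_pi_apply j).comp (measurable_pi_apply i)

theorem stmt1 {k p n r : ℕ} (S : Matrix (Fin k) (Fin k) ℝ) (hS : S.PosSemidef)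
    (hrank : S.rank = r) (hrk : r < k)
    (M : Matrix (Fin p) (Fin k) ℝ) (hM : M.rank = p) (hMS : (M * S).rank = p)
    (hpr : p ≤ r) (hpn : p ≤ n) :
    (M * S * Mᵀ).rank = p ∧ ∀ᵐ A ∂(wishart n S), (M * A * Mᵀ).rank = p := by
  set Q : Matrix (Fin k) (Fin k) ℝ := psdSqrt S with hQ
  have hQQ : Q * Q = S := by
    have hU : (star hS.1.eigenvectorUnitary : Matrix (Fin k) (Fin k) ℝ) *
        (hS.1.eigenvectorUnitary : Matrix (Fin k) (Fin k) ℝ) = 1 :=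
      Unitary.coe_star_mul_self _
    have key : Matrix.diagonal (((↑) : ℝ → ℝ) ∘ (fun x => √x) ∘ hS.1.eigenvalues) *
        Matrix.diagonal (((↑) : ℝ → ℝ) ∘ (fun x => √x) ∘ hS.1.eigenvalues)
        = Matrix.diagonal (RCLike.ofReal ∘ hS.1.eigenvalues) := by
      rw [diagonal_mul_diagonal]
      congr 1
      funext i
      simp [Real.mul_self_sqrt (hS.eigenvalues_nonneg i)]
    conv_rhs => rw [hS.1.spectral_theorem, Unitary.conjStarAlgAut_apply]
    rw [hQ, psdSqrt, dif_pos hS]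
    simp only [Matrix.mul_assoc]
    rw [← Matrix.mul_assoc _ _ (Matrix.diagonal _ * _), hU, Matrix.one_mul, ← Matrix.mul_assoc _ _ (star _ : Matrix (Fin k) (Fin k) ℝ), key]
  have hQT : Qᵀ = Q := by
    rw [hQ, psdSqrt, dif_pos hS]
    simp [Matrix.transpose_mul, Matrix.mul_assoc, Matrix.star_eq_conjTranspose]
  set B : Matrix (Fin p) (Fin k) ℝ := M * Q with hB
  have hBrank : B.rank = p := by
    have hle : B.rank ≤ p := by simpa using B.rank_le_card_height
    have hge : p ≤ B.rank := by
      have hMSB : M * S = B * Q := by rw [hB, Matrix.mul_assoc, hQQ]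
      have h := Matrix.rank_mul_le_left B Q
      rw [← hMSB, hMS] at h
      exact h
    omega
  have hMSM : M * S * Mᵀ = B * Bᵀ := by
    rw [hB, Matrix.transpose_mul, hQT, ← Matrix.mul_assoc, Matrix.mul_assoc M Q Q, hQQ]
  have part1 : (M * S * Mᵀ).rank = p := by
    rw [hMSM, Matrix.rank_self_mul_transpose, hBrank]
  refine ⟨part1, ?_⟩
  -- part 2
  set G : (Fin n → (Fin k → ℝ)) → (Fin n → (Fin k → ℝ)) := fun X c => Q.mulVec (X c) with hG
  set f : (Fin n → (Fin k → ℝ)) → Matrix (Fin k) (Fin k) ℝ :=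
    fun X => Matrix.of fun i j => ∑ c, X c i * X c j with hf
  have hGmeas : Measurable G :=
    measurable_pi_lambda _ fun c => (measurable_mulVec_fun _).comp (measurable_pi_apply c)
  have hfmeas : Measurable f := by
    apply measurable_pi_lambda
    intro i
    apply measurable_pi_lambda
    intro j
    simp only [hf, Matrix.of_apply]
    apply Finset.measurable_sum
    intro c _
    exact Measurable.mul (f := fun x : Fin n → (Fin k → ℝ) => x c i) (g := fun x => x c j)
      ((measurable_pi_apply i).comp (measurable_pi_apply c))
      ((measurable_pi_apply j).comp (measurable_pi_apply c))
  have hwishart : wishart n S = ((Measure.pi fun _ : Fin n => stdGaussianPi k)).map (f ∘ G) := by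
    unfold wishart
    rw [pi_mvNormal_eq_map, Measure.map_map hfmeas hGmeas]
  rw [hwishart]
  have hsetmeas : MeasurableSet {A : Matrix (Fin k) (Fin k) ℝ | (M * A * Mᵀ).rank = p} := by
    have heq : {A : Matrix (Fin k) (Fin k) ℝ | (M * A * Mᵀ).rank = p}
        = {A | (M * A * Mᵀ).det ≠ 0} := by
      ext A
      exact (det_ne_zero_iff_rank (M * A * Mᵀ)).symm
    rw [heq]
    have hdet : Measurable fun A : Matrix (Fin k) (Fin k) ℝ => (M * A * Mᵀ).det := by
      apply measurable_det_comp
      intro a b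
      simp only [Matrix.mul_apply]
      exact Finset.measurable_sum _ fun x _ =>
        (Finset.measurable_sum _ fun y _ =>
          (measurable_matrix_entry y x).const_mul _).mul_const _
    exact (hdet (measurableSet_singleton 0)).compl
  rw [MeasureTheory.ae_map_iff (hfmeas.comp hGmeas).aemeasurable hsetmeas]
  have hcore := core_linindep B hBrank p le_rfl (Fin.castLE hpn) (Fin.castLE_injective hpn)
  refine hcore.mono fun X hX => ?_
  -- pointwise algebra
  show (M * f (G X) * Mᵀ).rank = p
  set Y : Matrix (Fin n) (Fin k) ℝ := Matrix.of fun c i => Q.mulVec (X c) i with hY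
  have hfGX : f (G X) = Yᵀ * Y := by
    ext i j
    simp [hf, hG, hY, Matrix.mul_apply]
  set Z : Matrix (Fin n) (Fin p) ℝ := Y * Mᵀ with hZdef
  have hMAM : M * f (G X) * Mᵀ = Zᵀ * Z := by
    rw [hfGX, hZdef, Matrix.transpose_mul, Matrix.transpose_transpose, Matrix.mul_assoc,
      Matrix.mul_assoc, Matrix.mul_assoc]
  have hZ : ∀ (c : Fin n) (a : Fin p), Z c a = B.mulVec (X c) a := by
    intro c a
    simp only [hZdef, hY, hB, Matrix.mul_apply, Matrix.mulVec, dotProduct,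
      Matrix.transpose_apply, Matrix.of_apply, Finset.sum_mul, Finset.mul_sum]
    rw [Finset.sum_comm]
    exact Finset.sum_congr rfl fun i _ => Finset.sum_congr rfl fun t _ => by ring
  have hZrank : Z.rank = p := by
    have hle : Z.rank ≤ p := by simpa using Z.rank_le_card_width
    set E : Matrix (Fin p) (Fin n) ℝ :=
      Matrix.of fun a c => if Fin.castLE hpn a = c then (1:ℝ) else 0 with hE
    set W : Matrix (Fin p) (Fin p) ℝ :=
      Matrix.of fun a b => B.mulVec (X (Fin.castLE hpn a)) b with hW
    have hWE : W = E * Z := by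
      ext a b
      simp only [hW, hE, Matrix.mul_apply, Matrix.of_apply, ite_mul, one_mul, zero_mul]
      rw [Finset.sum_ite_eq]
      simp [hZ]
    have hWrank : W.rank = p := by
      have hunit : IsUnit W := by
        rw [← Matrix.linearIndependent_rows_iff_isUnit]
        have hWa : W.row = fun a => B.mulVec (X (Fin.castLE hpn a)) := by
          funext a
          rfl
        rw [hWa]
        exact hX
      simpa using Matrix.rank_of_isUnit W hunit
    have hge : p ≤ Z.rank := by
      have h := Matrix.rank_mul_le_right E Z
      rw [← hWE] at h
      omega
    omega
  rw [hMAM, Matrix.rank_transpose_mul_self, hZrank]
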